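/- Fix integers m, N ≥ 1, observations x_1,…,x_m ∈ {1,…,N}, a real M ≥ 0, labels y_1,…,y_m ∈ [0,M], and a real b ≥ 0. Let 0 = j_0 < j_1 < … < j_k = N be candidate split points such that for every t ∈ {0,…,k−1}, #{i : j_t < x_i ≤ j_{t+1}} ≤ b. Then min_{0 ≤ t ≤ k} L(j_t) ≤ min_{1 ≤ j ≤ N} L(j) + 5bM²/(4m), where L is the mean squared error of a split. -/

import Mathlib

open Finset

lemma sum_sq_mean_le {ι : Type*} (s : Finset ι) (y : ι → ℝ) (c : ℝ) (hs : s.Nonempty) :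
    ∑ i ∈ s, (y i - (∑ i ∈ s, y i) / (s.card : ℝ)) ^ 2 ≤ ∑ i ∈ s, (y i - c) ^ 2 := by
  have hn : (0:ℝ) < (s.card : ℝ) := by exact_mod_cast Finset.card_pos.mpr hs
  set μ := (∑ i ∈ s, y i) / (s.card : ℝ) with hμ
  have hS : ∑ i ∈ s, y i = (s.card : ℝ) * μ := by rw [hμ]; field_simp
  have hzero : ∑ i ∈ s, (y i - μ) = 0 := by
    rw [Finset.sum_sub_distrib, Finset.sum_const, nsmul_eq_mul, hS]; ring
  have expand : ∑ i ∈ s, (y i - c) ^ 2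
      = ∑ i ∈ s, (y i - μ) ^ 2 + (2 * (μ - c)) * (∑ i ∈ s, (y i - μ))
        + (s.card : ℝ) * (μ - c) ^ 2 := by
    rw [Finset.mul_sum, ← Finset.sum_add_distrib,
      show ((s.card : ℝ) * (μ - c) ^ 2) = ∑ _i ∈ s, (μ - c) ^ 2 by
        rw [Finset.sum_const, nsmul_eq_mul], ← Finset.sum_add_distrib]
    exact Finset.sum_congr rfl fun i _ => by ring
  rw [expand, hzero]
  have : 0 ≤ (s.card : ℝ) * (μ - c) ^ 2 := mul_nonneg (Nat.cast_nonneg _) (sq_nonneg _)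
  linarith

lemma mean_mem {ι : Type*} (s : Finset ι) (hs : s.Nonempty) (y : ι → ℝ) (M : ℝ)
    (h0 : ∀ i ∈ s, 0 ≤ y i) (hMy : ∀ i ∈ s, y i ≤ M) :
    0 ≤ (∑ i ∈ s, y i) / (s.card : ℝ) ∧ (∑ i ∈ s, y i) / (s.card : ℝ) ≤ M := by
  have hn : (0:ℝ) < (s.card : ℝ) := by exact_mod_cast Finset.card_pos.mpr hs
  constructor
  · apply div_nonneg (Finset.sum_nonneg h0) hn.le
  · rw [div_le_iff₀ hn]
    calc ∑ i ∈ s, y i ≤ ∑ _i ∈ s, M := Finset.sum_le_sum hMy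
      _ = M * (s.card : ℝ) := by rw [Finset.sum_const, nsmul_eq_mul]; ring

lemma L_shift {m : ℕ} (hm : 1 ≤ m) (x : Fin m → ℕ)
    (M : ℝ) (hM : 0 ≤ M)
    (y : Fin m → ℝ) (hy : ∀ i, 0 ≤ y i ∧ y i ≤ M)
    (μ γ L : ℕ → ℝ)
    (hμ : ∀ k : ℕ, ({i : Fin m | x i ≤ k} : Finset (Fin m)).Nonempty →
      μ k = (∑ i ∈ ({i : Fin m | x i ≤ k} : Finset (Fin m)), y i) /
            (({i : Fin m | x i ≤ k} : Finset (Fin m)).card : ℝ))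
    (hγ : ∀ k : ℕ, ({i : Fin m | k < x i} : Finset (Fin m)).Nonempty →
      γ k = (∑ i ∈ ({i : Fin m | k < x i} : Finset (Fin m)), y i) /
            (({i : Fin m | k < x i} : Finset (Fin m)).card : ℝ))
    (hL : ∀ k : ℕ, L k = (1 / (m : ℝ)) *
      ((∑ i ∈ ({i : Fin m | x i ≤ k} : Finset (Fin m)), (y i - μ k) ^ 2) +
       (∑ i ∈ ({i : Fin m | k < x i} : Finset (Fin m)), (y i - γ k) ^ 2)))
    (b : ℝ) (hb : 0 ≤ b)
    (j' j : ℕ) (hjj : j' ≤ j)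
    (hcard : (({i : Fin m | j' < x i ∧ x i ≤ j} : Finset (Fin m)).card : ℝ) ≤ b) :
    L j' ≤ L j + b * M ^ 2 / (m : ℝ) := by
  have hmpos : (0:ℝ) < (m : ℝ) := by exact_mod_cast hm
  set A := ({i : Fin m | x i ≤ j'} : Finset (Fin m)) with hA
  set D := ({i : Fin m | j' < x i ∧ x i ≤ j} : Finset (Fin m)) with hD
  set B := ({i : Fin m | j < x i} : Finset (Fin m)) with hB
  set A' := ({i : Fin m | x i ≤ j} : Finset (Fin m)) with hA'
  set B' := ({i : Fin m | j' < x i} : Finset (Fin m)) with hB'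
  have hA'eq : A' = A ∪ D := by
    ext i; simp only [hA, hA', hD, Finset.mem_filter, Finset.mem_union, Finset.mem_univ,
      true_and, Set.mem_setOf_eq]; omega
  have hB'eq : B' = D ∪ B := by
    ext i; simp only [hB, hB', hD, Finset.mem_filter, Finset.mem_union, Finset.mem_univ,
      true_and, Set.mem_setOf_eq]; omega
  have hdAD : Disjoint A D := by
    rw [Finset.disjoint_left]
    intro i hi hi'
    simp only [hA, hD, Finset.mem_filter, Finset.mem_univ, true_and, Set.mem_setOf_eq] at hi hi'
    omega
  have hdDB : Disjoint D B := by
    rw [Finset.disjoint_left]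
    intro i hi hi'
    simp only [hB, hD, Finset.mem_filter, Finset.mem_univ, true_and, Set.mem_setOf_eq] at hi hi'
    omega
  -- bound for term 1
  have key1 : ∑ i ∈ A, (y i - μ j') ^ 2 ≤ ∑ i ∈ A', (y i - μ j) ^ 2 := by
    have hsub : A ⊆ A' := by rw [hA'eq]; exact Finset.subset_union_left
    by_cases hAne : A.Nonempty
    · calc ∑ i ∈ A, (y i - μ j') ^ 2 ≤ ∑ i ∈ A, (y i - μ j) ^ 2 := by
            rw [hμ j' hAne]; exact sum_sq_mean_le A y (μ j) hAne
        _ ≤ ∑ i ∈ A', (y i - μ j) ^ 2 :=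
            Finset.sum_le_sum_of_subset_of_nonneg hsub (fun i _ _ => sq_nonneg _)
    · rw [Finset.not_nonempty_iff_eq_empty] at hAne
      rw [hAne, Finset.sum_empty]
      exact Finset.sum_nonneg fun i _ => sq_nonneg _
  -- choose comparison constant for the right side
  set c : ℝ := if B.Nonempty then γ j else 0 with hc
  have hcbd : 0 ≤ c ∧ c ≤ M := by
    by_cases hBne : B.Nonempty
    · have := mean_mem B hBne y M (fun i _ => (hy i).1) (fun i _ => (hy i).2)
      rw [hc, if_pos hBne, hγ j hBne]; exact this
    · rw [hc, if_neg hBne]; exact ⟨le_refl 0, hM⟩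
  have hBc : ∑ i ∈ B, (y i - c) ^ 2 = ∑ i ∈ B, (y i - γ j) ^ 2 := by
    by_cases hBne : B.Nonempty
    · rw [hc, if_pos hBne]
    · rw [Finset.not_nonempty_iff_eq_empty] at hBne
      rw [hBne, Finset.sum_empty, Finset.sum_empty]
  have key2 : ∑ i ∈ B', (y i - γ j') ^ 2 ≤ ∑ i ∈ B, (y i - γ j) ^ 2 + b * M ^ 2 := by
    have step1 : ∑ i ∈ B', (y i - γ j') ^ 2 ≤ ∑ i ∈ B', (y i - c) ^ 2 := by
      by_cases hB'ne : B'.Nonempty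
      · rw [hγ j' hB'ne]; exact sum_sq_mean_le B' y c hB'ne
      · rw [Finset.not_nonempty_iff_eq_empty] at hB'ne
        rw [hB'ne, Finset.sum_empty, Finset.sum_empty]
    have step2 : ∑ i ∈ B', (y i - c) ^ 2 = ∑ i ∈ D, (y i - c) ^ 2 + ∑ i ∈ B, (y i - c) ^ 2 := by
      rw [hB'eq, Finset.sum_union hdDB]
    have step3 : ∑ i ∈ D, (y i - c) ^ 2 ≤ b * M ^ 2 := by
      calc ∑ i ∈ D, (y i - c) ^ 2 ≤ ∑ _i ∈ D, M ^ 2 := by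
            apply Finset.sum_le_sum
            intro i _
            have h1 := (hy i).1; have h2 := (hy i).2
            nlinarith [hcbd.1, hcbd.2]
        _ = (D.card : ℝ) * M ^ 2 := by rw [Finset.sum_const, nsmul_eq_mul]
        _ ≤ b * M ^ 2 := mul_le_mul_of_nonneg_right hcard (sq_nonneg M)
    rw [hBc] at step2
    linarith
  rw [hL j', hL j]
  have hsum := add_le_add key1 key2
  have h3 : (1 / (m:ℝ)) * ((∑ i ∈ A, (y i - μ j') ^ 2) + ∑ i ∈ B', (y i - γ j') ^ 2)
      ≤ (1 / (m:ℝ)) * ((∑ i ∈ A', (y i - μ j) ^ 2) + (∑ i ∈ B, (y i - γ j) ^ 2) + b * M ^ 2) :=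
    mul_le_mul_of_nonneg_left (by linarith) (by positivity)
  have h4 : (1 / (m:ℝ)) * ((∑ i ∈ A', (y i - μ j) ^ 2) + (∑ i ∈ B, (y i - γ j) ^ 2) + b * M ^ 2)
      = (1 / (m:ℝ)) * ((∑ i ∈ A', (y i - μ j) ^ 2) + (∑ i ∈ B, (y i - γ j) ^ 2))
        + b * M ^ 2 / (m:ℝ) := by ring
  linarith

/-- If candidate split points `0 = j₀ < j₁ < … < j_k = N` are such that at most `b`
observations lie strictly between consecutive candidates, then the best candidate
split has mean squared error within an additive `5bM²/(4m)` of the optimum over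
all splits `j ∈ {1,…,N}`. -/
theorem candidate_splits_additive_approx
    (m N : ℕ) (hm : 1 ≤ m) (hN : 1 ≤ N)
    (x : Fin m → ℕ) (hx : ∀ i, 1 ≤ x i ∧ x i ≤ N)
    (M : ℝ) (hM : 0 ≤ M)
    (y : Fin m → ℝ) (hy : ∀ i, 0 ≤ y i ∧ y i ≤ M)
    (μ γ L : ℕ → ℝ)
    (hμ : ∀ k : ℕ, ({i : Fin m | x i ≤ k} : Finset (Fin m)).Nonempty →
      μ k = (∑ i ∈ ({i : Fin m | x i ≤ k} : Finset (Fin m)), y i) /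
            (({i : Fin m | x i ≤ k} : Finset (Fin m)).card : ℝ))
    (hγ : ∀ k : ℕ, ({i : Fin m | k < x i} : Finset (Fin m)).Nonempty →
      γ k = (∑ i ∈ ({i : Fin m | k < x i} : Finset (Fin m)), y i) /
            (({i : Fin m | k < x i} : Finset (Fin m)).card : ℝ))
    (hL : ∀ k : ℕ, L k = (1 / (m : ℝ)) *
      ((∑ i ∈ ({i : Fin m | x i ≤ k} : Finset (Fin m)), (y i - μ k) ^ 2) +
       (∑ i ∈ ({i : Fin m | k < x i} : Finset (Fin m)), (y i - γ k) ^ 2)))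
    (b : ℝ) (hb : 0 ≤ b)
    (k : ℕ) (js : ℕ → ℕ)
    (hjs0 : js 0 = 0) (hjsk : js k = N)
    (hmono : ∀ t : ℕ, t < k → js t < js (t + 1))
    (hgap : ∀ t : ℕ, t < k →
      ((({i : Fin m | js t < x i ∧ x i ≤ js (t + 1)} : Finset (Fin m)).card : ℝ) ≤ b)) :
    ∃ t : ℕ, t ≤ k ∧ ∀ j : ℕ, 1 ≤ j → j ≤ N →
      L (js t) ≤ L j + 5 * b * M ^ 2 / (4 * (m : ℝ)) := by
  have hmpos : (0:ℝ) < (m : ℝ) := by exact_mod_cast hm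
  obtain ⟨t, htmem, htmin⟩ := Finset.exists_min_image (Finset.range (k + 1))
    (fun t => L (js t)) ⟨0, Finset.mem_range.mpr (Nat.succ_pos k)⟩
  rw [Finset.mem_range] at htmem
  refine ⟨t, by omega, ?_⟩
  intro j hj1 hjN
  -- find consecutive candidates bracketing j
  have hP : ∃ t', j ≤ js t' := ⟨k, by rw [hjsk]; exact hjN⟩
  have ht1 : j ≤ js (Nat.find hP) := Nat.find_spec hP
  have ht1lek : Nat.find hP ≤ k := Nat.find_min' hP (by rw [hjsk]; exact hjN)
  have ht1pos : Nat.find hP ≠ 0 := by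
    intro h0
    rw [h0, hjs0] at ht1; omega
  set t' := Nat.find hP - 1 with ht'
  have hprev : ¬ j ≤ js t' := Nat.find_min hP (by omega)
  have ht'k : t' < k := by omega
  have ht'1 : t' + 1 = Nat.find hP := by omega
  have hjs_lt : js t' < j := by omega
  have hj_le : j ≤ js (t' + 1) := by rw [ht'1]; exact ht1
  -- card bound for the gap between js t' and j
  have hcard : (({i : Fin m | js t' < x i ∧ x i ≤ j} : Finset (Fin m)).card : ℝ) ≤ b := by
    refine le_trans ?_ (hgap t' ht'k)
    have hsub : ({i : Fin m | js t' < x i ∧ x i ≤ j} : Finset (Fin m)) ⊆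
        ({i : Fin m | js t' < x i ∧ x i ≤ js (t' + 1)} : Finset (Fin m)) := by
      intro i hi
      simp only [Finset.mem_filter, Finset.mem_univ, true_and, Set.mem_setOf_eq] at hi ⊢
      omega
    exact_mod_cast Finset.card_le_card hsub
  have hshift := L_shift hm x M hM y hy μ γ L hμ hγ hL b hb (js t') j hjs_lt.le hcard
  have hmin : L (js t) ≤ L (js t') := htmin t' (Finset.mem_range.mpr (by omega))
  have hconst : b * M ^ 2 / (m : ℝ) ≤ 5 * b * M ^ 2 / (4 * (m : ℝ)) := by
    rw [div_le_div_iff₀ hmpos (by positivity)]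
    nlinarith [mul_nonneg (mul_nonneg hb (sq_nonneg M)) hmpos.le]
  linarith
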